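/- Variance of the X-process: there is a universal constant c > 0 such that for every f ∈ F, Var[X(f)] ≤ c · ‖f − g_f‖_μ², and consequently (since ‖f − g_f‖_μ ≤ 2‖f − Tf‖_μ and (1−β)‖f − Tf‖_μ² ≤ E[X(f)]), if β < 1 then Var[X(f)] ≤ (c'/(1−β)) · E[X(f)] for a universal constant c'; moreover if F is convex then Var[X(f)] ≤ c'' · E[X(f)] for a universal constant c''. -/

import Mathlib

open MeasureTheory ProbabilityTheory
open scoped ENNReal NNReal

noncomputable section

/-- Expected value of `f (s, ·)` under the policy kernel at state `s`: `f(s,π)`. -/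
def polExp {S A : Type*} [MeasurableSpace S] [MeasurableSpace A]
    (pol : Kernel S A) (f : S × A → ℝ) (s : S) : ℝ :=
  ∫ a, f (s, a) ∂(pol s)

/-- The Bellman evaluation operator `(Tf)(s,a) = r(s,a) + γ E_{s' ∼ P(·|s,a)} f(s',π)`. -/
def bellmanOp {S A : Type*} [MeasurableSpace S] [MeasurableSpace A]
    (γ : ℝ) (rew : S × A → ℝ) (P : Kernel (S × A) S) (pol : Kernel S A)
    (f : S × A → ℝ) : S × A → ℝ :=
  fun sa => rew sa + γ * ∫ s', polExp pol f s' ∂(P sa)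

/-- Squared `L²(μ)` norm: `‖h‖_μ² = E_μ h²`. -/
def l2sq {X : Type*} [MeasurableSpace X] (μ : Measure X) (h : X → ℝ) : ℝ :=
  ∫ x, (h x) ^ 2 ∂μ

/-- `L²(μ)` norm `‖h‖_μ`. -/
def l2 {X : Type*} [MeasurableSpace X] (μ : Measure X) (h : X → ℝ) : ℝ :=
  Real.sqrt (l2sq μ h)

/-- Distance in `L²(μ)` from `h` to the class `F`: `inf_{g ∈ F} ‖g − h‖_μ`. -/
def projDist {S A : Type*} [MeasurableSpace S] [MeasurableSpace A]
    (μ : Measure (S × A)) (F : Set ((S × A) → ℝ)) (h : (S × A) → ℝ) : ℝ :=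
  sInf ((fun g => l2 μ (fun x => g x - h x)) '' F)

/-- Bellman error `‖f − Tf‖_μ`. -/
def bellErr {S A : Type*} [MeasurableSpace S] [MeasurableSpace A]
    (γ : ℝ) (rew : S × A → ℝ) (P : Kernel (S × A) S) (pol : Kernel S A)
    (μ : Measure (S × A)) (f : (S × A) → ℝ) : ℝ :=
  l2 μ (fun x => f x - bellmanOp γ rew P pol f x)

/-- The localized class `F(r) = {f ∈ F : ‖f − Tf‖_μ ≤ r}`. -/
def Floc {S A : Type*} [MeasurableSpace S] [MeasurableSpace A]
    (γ : ℝ) (rew : S × A → ℝ) (P : Kernel (S × A) S) (pol : Kernel S A)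
    (μ : Measure (S × A)) (F : Set ((S × A) → ℝ)) (r : ℝ) : Set ((S × A) → ℝ) :=
  {f ∈ F | bellErr γ rew P pol μ f ≤ r}

/-- The incompleteness function `I(r) = sup_{f ∈ F(r)} inf_{g ∈ F} ‖g − Tf‖_μ`. -/
def Iloc {S A : Type*} [MeasurableSpace S] [MeasurableSpace A]
    (γ : ℝ) (rew : S × A → ℝ) (P : Kernel (S × A) S) (pol : Kernel S A)
    (μ : Measure (S × A)) (F : Set ((S × A) → ℝ)) (r : ℝ) : ℝ :=
  sSup ((fun f => projDist μ F (bellmanOp γ rew P pol f)) '' Floc γ rew P pol μ F r)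

/-- The incompleteness factor
`β = sup_{f ∈ F, ‖f−Tf‖_μ > 0} inf_{g ∈ F} ‖g − Tf‖_μ / ‖f − Tf‖_μ`. -/
def betaFac {S A : Type*} [MeasurableSpace S] [MeasurableSpace A]
    (γ : ℝ) (rew : S × A → ℝ) (P : Kernel (S × A) S) (pol : Kernel S A)
    (μ : Measure (S × A)) (F : Set ((S × A) → ℝ)) : ℝ :=
  sSup ((fun f => projDist μ F (bellmanOp γ rew P pol f) / bellErr γ rew P pol μ f) ''
    {f ∈ F | 0 < bellErr γ rew P pol μ f})

/-- The population minimax loss `M(f) = ‖f − Tf‖_μ² − inf_{g ∈ F} ‖g − Tf‖_μ²`. -/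
def minimaxLoss {S A : Type*} [MeasurableSpace S] [MeasurableSpace A]
    (γ : ℝ) (rew : S × A → ℝ) (P : Kernel (S × A) S) (pol : Kernel S A)
    (μ : Measure (S × A)) (F : Set ((S × A) → ℝ)) (f : (S × A) → ℝ) : ℝ :=
  l2sq μ (fun x => f x - bellmanOp γ rew P pol f x) -
    sInf ((fun g => l2sq μ (fun x => g x - bellmanOp γ rew P pol f x)) '' F)

/-- One step of the state-action chain: transition by `P` then act by `pol`. -/
def stepMeas {S A : Type*} [MeasurableSpace S] [MeasurableSpace A]
    (P : Kernel (S × A) S) (pol : Kernel S A) (sa : S × A) : Measure (S × A) :=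
  (P sa).bind (fun s' => (pol s').map (fun a' => (s', a')))

/-- The law `P_h` of `(S_h, A_h)` when following `pol` from the state `s0`. -/
def stepLaw {S A : Type*} [MeasurableSpace S] [MeasurableSpace A]
    (P : Kernel (S × A) S) (pol : Kernel S A) (s0 : S) : ℕ → Measure (S × A)
  | 0 => (pol s0).map (fun a => (s0, a))
  | (h + 1) => (stepLaw P pol s0 h).bind (stepMeas P pol)

/-- The discounted occupancy measure `d^π = (1−γ) Σ_{h≥0} γ^h P_h`. -/
def occMeas {S A : Type*} [MeasurableSpace S] [MeasurableSpace A]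
    (γ : ℝ) (P : Kernel (S × A) S) (pol : Kernel S A) (s0 : S) : Measure (S × A) :=
  ENNReal.ofReal (1 - γ) •
    Measure.sum (fun h : ℕ => ENNReal.ofReal γ ^ h • stepLaw P pol s0 h)

/-- The prediction error `E(f) = (f* − f)(s₀, π)`. -/
def predErr {S A : Type*} [MeasurableSpace S] [MeasurableSpace A]
    (pol : Kernel S A) (fstar f : S × A → ℝ) (s0 : S) : ℝ :=
  polExp pol (fun x => fstar x - f x) s0

/-- The concentrability coefficient `C = sup_{f ∈ F} ‖f − Tf‖_π² / ‖f − Tf‖_μ²`. -/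
def concCoef {S A : Type*} [MeasurableSpace S] [MeasurableSpace A]
    (γ : ℝ) (rew : S × A → ℝ) (P : Kernel (S × A) S) (pol : Kernel S A)
    (μ dpi : Measure (S × A)) (F : Set ((S × A) → ℝ)) : ℝ :=
  sSup ((fun f => l2sq dpi (fun x => f x - bellmanOp γ rew P pol f x) /
      l2sq μ (fun x => f x - bellmanOp γ rew P pol f x)) '' F)

/-- The law of a data tuple `(s, a, R, s')` with `(s,a) ∼ μ`, `R ∼ RL(s,a)`,
`s' ∼ P(·|s,a)`. -/
def tupleLaw {S A : Type*} [MeasurableSpace S] [MeasurableSpace A]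
    (μ : Measure (S × A)) (RL : Kernel (S × A) ℝ) (P : Kernel (S × A) S) :
    Measure ((S × A) × ℝ × S) :=
  μ.bind (fun sa => ((RL sa).prod (P sa)).map (fun rs => (sa, rs)))

/-- The squared TD cost `C(g,f) = (g(s,a) − R − γ f(s',π))²` of a tuple. -/
def tdCost {S A : Type*} [MeasurableSpace S] [MeasurableSpace A]
    (γ : ℝ) (pol : Kernel S A) (g f : S × A → ℝ) (t : (S × A) × ℝ × S) : ℝ :=
  (g t.1 - t.2.1 - γ * polExp pol f t.2.2) ^ 2

/-- The empirical loss `L̂(g,f)`: the average of the squared TD cost over the dataset. -/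
def empLoss {S A : Type*} [MeasurableSpace S] [MeasurableSpace A]
    (γ : ℝ) (pol : Kernel S A) {n : ℕ} (D : Fin n → (S × A) × ℝ × S)
    (g f : S × A → ℝ) : ℝ :=
  (∑ i, tdCost γ pol g f (D i)) / n

/-- The empirical minimax objective `M̂(f) = L̂(f,f) − inf_{g ∈ F} L̂(g,f)`. -/
def empMinimax {S A : Type*} [MeasurableSpace S] [MeasurableSpace A]
    (γ : ℝ) (pol : Kernel S A) (F : Set ((S × A) → ℝ)) {n : ℕ}
    (D : Fin n → (S × A) × ℝ × S) (f : S × A → ℝ) : ℝ :=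
  empLoss γ pol D f f - sInf ((fun g => empLoss γ pol D g f) '' F)

/-- `f̂` is an empirical minimizer of `M̂` over `F`. -/
def IsEmpMinimizer {S A : Type*} [MeasurableSpace S] [MeasurableSpace A]
    (γ : ℝ) (pol : Kernel S A) (F : Set ((S × A) → ℝ)) {n : ℕ}
    (D : Fin n → (S × A) × ℝ × S) (fhat : S × A → ℝ) : Prop :=
  fhat ∈ F ∧ ∀ f ∈ F, empMinimax γ pol F D fhat ≤ empMinimax γ pol F D f

/-- The law of a single Rademacher sign: `±1` with probability `1/2` each. -/
def signMeas : Measure ℝ :=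
  (2⁻¹ : ℝ≥0∞) • Measure.dirac (1 : ℝ) + (2⁻¹ : ℝ≥0∞) • Measure.dirac (-1 : ℝ)

/-- Rademacher complexity of a class `H` with `n` covariates drawn i.i.d. from `ξ`:
`R_n[H] = E sup_{h ∈ H} |(1/n) Σ_i ε_i h(x_i)|`. -/
def radComp {X : Type*} [MeasurableSpace X] (ξ : Measure X) (n : ℕ)
    (H : Set (X → ℝ)) : ℝ :=
  ∫ p, sSup ((fun h => |(∑ i, p.2 i * h (p.1 i)) / n|) '' H)
    ∂((Measure.pi (fun _ : Fin n => ξ)).prod (Measure.pi (fun _ : Fin n => signMeas)))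

/-- The `X`-process `X(f) = C(f,f) − C(g_f, f)` as a function of the data tuple. -/
def Xproc {S A : Type*} [MeasurableSpace S] [MeasurableSpace A]
    (γ : ℝ) (pol : Kernel S A) (gf : ((S × A) → ℝ) → (S × A) → ℝ)
    (f : S × A → ℝ) : (S × A) × ℝ × S → ℝ :=
  fun t => tdCost γ pol f f t - tdCost γ pol (gf f) f t

/-- The `Y`-process `Y(g) = C(f*,f*) − C(g, f*)` as a function of the data tuple. -/
def Yproc {S A : Type*} [MeasurableSpace S] [MeasurableSpace A]
    (γ : ℝ) (pol : Kernel S A) (fstar g : S × A → ℝ) : (S × A) × ℝ × S → ℝ :=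
  fun t => tdCost γ pol fstar fstar t - tdCost γ pol g fstar t

end

section AuxLemmas


variable {S A : Type} [MeasurableSpace S] [MeasurableSpace A]

lemma aux_int {X : Type*} [MeasurableSpace X] {μ : Measure X} [IsFiniteMeasure μ]
    {f : X → ℝ} (hf : AEStronglyMeasurable f μ) (C : ℝ) (h : ∀ᵐ x ∂μ, |f x| ≤ C) :
    Integrable f μ :=
  (integrable_const C).mono' hf (by simpa [Real.norm_eq_abs] using h)

lemma aux_int' {X : Type*} [MeasurableSpace X] {μ : Measure X} [IsFiniteMeasure μ]
    {f : X → ℝ} (hf : Measurable f) (C : ℝ) (h : ∀ x, |f x| ≤ C) :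
    Integrable f μ :=
  aux_int hf.aestronglyMeasurable C (Filter.Eventually.of_forall h)

lemma aux_sq_abs {a C : ℝ} (h : |a| ≤ C) : |a ^ 2| ≤ C ^ 2 := by
  rw [abs_pow]; exact pow_le_pow_left₀ (abs_nonneg a) h 2

lemma aux_mul_abs {a b Ca Cb : ℝ} (ha : |a| ≤ Ca) (hb : |b| ≤ Cb) : |a * b| ≤ Ca * Cb := by
  rw [abs_mul]
  exact mul_le_mul ha hb (abs_nonneg b) ((abs_nonneg a).trans ha)

lemma aux_polExp_meas (pol : Kernel S A) [IsSFiniteKernel pol] {f : S × A → ℝ}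
    (hf : Measurable f) : Measurable (polExp pol f) :=
  (MeasureTheory.StronglyMeasurable.integral_kernel_prod_right' (κ := pol)
    hf.stronglyMeasurable).measurable

lemma aux_polExp_bound (pol : Kernel S A) [IsMarkovKernel pol] {f : S × A → ℝ}
    (hf : ∀ x, |f x| ≤ 1) (s : S) : |polExp pol f s| ≤ 1 := by
  have h := norm_integral_le_of_norm_le_const (μ := pol s) (f := fun a => f (s, a))
    (C := 1) (Filter.Eventually.of_forall fun a => by
      simpa [Real.norm_eq_abs] using hf (s, a))
  simpa [polExp, Real.norm_eq_abs, measure_univ] using h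

lemma aux_bellman_meas (γ : ℝ) {rew : S × A → ℝ} (hrew : Measurable rew)
    (P : Kernel (S × A) S) [IsSFiniteKernel P] (pol : Kernel S A) [IsSFiniteKernel pol]
    {f : S × A → ℝ} (hf : Measurable f) : Measurable (bellmanOp γ rew P pol f) := by
  have h1 : Measurable fun sa : S × A => ∫ s', polExp pol f s' ∂(P sa) :=
    (MeasureTheory.StronglyMeasurable.integral_kernel_prod_right' (κ := P)
      (f := fun u : (S × A) × S => polExp pol f u.2)
      ((aux_polExp_meas pol hf).comp measurable_snd).stronglyMeasurable).measurable
  exact hrew.add (measurable_const.mul h1)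

lemma aux_bellman_bound {γ : ℝ} (hγ0 : 0 ≤ γ) (hγ1 : γ ≤ 1) {rew : S × A → ℝ}
    (hrew : ∀ x, rew x ∈ Set.Icc (0:ℝ) 1)
    (P : Kernel (S × A) S) [IsMarkovKernel P] (pol : Kernel S A) [IsMarkovKernel pol]
    {f : S × A → ℝ} (hf : ∀ x, |f x| ≤ 1) (sa : S × A) :
    |bellmanOp γ rew P pol f sa| ≤ 2 := by
  have h1 : |∫ s', polExp pol f s' ∂(P sa)| ≤ 1 := by
    have h := norm_integral_le_of_norm_le_const (μ := P sa) (f := fun s' => polExp pol f s')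
      (C := 1) (Filter.Eventually.of_forall fun s' => by
        simpa [Real.norm_eq_abs] using aux_polExp_bound pol hf s')
    simpa [Real.norm_eq_abs, measure_univ] using h
  have h2 := (hrew sa).1
  have h3 := (hrew sa).2
  have h4 : |γ * ∫ s', polExp pol f s' ∂(P sa)| ≤ 1 := by
    rw [abs_mul, abs_of_nonneg hγ0]
    nlinarith [abs_nonneg (∫ s', polExp pol f s' ∂(P sa))]
  have h5 := abs_add_le (rew sa) (γ * ∫ s', polExp pol f s' ∂(P sa))
  have h6 : |rew sa| ≤ 1 := abs_le.mpr ⟨by linarith, h3⟩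
  calc |bellmanOp γ rew P pol f sa| = |rew sa + γ * ∫ s', polExp pol f s' ∂(P sa)| := rfl
    _ ≤ |rew sa| + |γ * ∫ s', polExp pol f s' ∂(P sa)| := h5
    _ ≤ 2 := by linarith

lemma aux_expand {X : Type*} [MeasurableSpace X] (μ : Measure X) [IsFiniteMeasure μ]
    {p q : X → ℝ} (hp : Measurable p) (hq : Measurable q) (Cp Cq : ℝ)
    (hpb : ∀ x, |p x| ≤ Cp) (hqb : ∀ x, |q x| ≤ Cq) (t : ℝ) :
    ∫ x, (p x + t * q x) ^ 2 ∂μ =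
      ∫ x, p x ^ 2 ∂μ + 2 * t * ∫ x, p x * q x ∂μ + t ^ 2 * ∫ x, q x ^ 2 ∂μ := by
  have ip2 : Integrable (fun x => p x ^ 2) μ :=
    aux_int' (hp.pow_const 2) (Cp ^ 2) fun x => aux_sq_abs (hpb x)
  have iq2 : Integrable (fun x => q x ^ 2) μ :=
    aux_int' (hq.pow_const 2) (Cq ^ 2) fun x => aux_sq_abs (hqb x)
  have ipq : Integrable (fun x => p x * q x) μ :=
    aux_int' (hp.mul hq) (Cp * Cq) fun x => aux_mul_abs (hpb x) (hqb x)
  calc ∫ x, (p x + t * q x) ^ 2 ∂μ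
      = ∫ x, (p x ^ 2 + (2 * t) * (p x * q x) + t ^ 2 * q x ^ 2) ∂μ :=
        integral_congr_ae (Filter.Eventually.of_forall fun x => by ring)
    _ = (∫ x, (p x ^ 2 + 2 * t * (p x * q x)) ∂μ) + ∫ x, t ^ 2 * q x ^ 2 ∂μ :=
        integral_add (ip2.add (ipq.const_mul (2 * t))) (iq2.const_mul (t ^ 2))
    _ = ((∫ x, p x ^ 2 ∂μ) + ∫ x, 2 * t * (p x * q x) ∂μ) + ∫ x, t ^ 2 * q x ^ 2 ∂μ := by
        rw [integral_add ip2 (ipq.const_mul (2 * t))]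
    _ = ∫ x, p x ^ 2 ∂μ + 2 * t * ∫ x, p x * q x ∂μ + t ^ 2 * ∫ x, q x ^ 2 ∂μ := by
        rw [integral_const_mul, integral_const_mul]

end AuxLemmas

noncomputable section

set_option maxHeartbeats 2000000 in
/-- Variance of the `X`-process: there are universal constants
`c, c', c'' > 0` such that for every `f ∈ F`, `Var[X(f)] ≤ c·‖f − g_f‖_μ²`; if
`β < 1` then `Var[X(f)] ≤ (c'/(1−β))·E[X(f)]`; and if `F` is convex then
`Var[X(f)] ≤ c''·E[X(f)]`. -/
theorem variance_of_X_process :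
    ∃ c c' c'' : ℝ, 0 < c ∧ 0 < c' ∧ 0 < c'' ∧
      ∀ (S A : Type) [MeasurableSpace S] [MeasurableSpace A]
        (γ : ℝ), 0 ≤ γ → γ < 1 →
      ∀ (rew : S × A → ℝ), Measurable rew → (∀ x, rew x ∈ Set.Icc (0 : ℝ) 1) →
      ∀ (P : Kernel (S × A) S), IsMarkovKernel P →
      ∀ (pol : Kernel S A), IsMarkovKernel pol →
      ∀ (μ : Measure (S × A)), IsProbabilityMeasure μ →
      -- the reward kernel, supported on `[0,1]` with conditional mean `rew`
      ∀ (RL : Kernel (S × A) ℝ), IsMarkovKernel RL →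
        (∀ x, (RL x) (Set.Icc (0 : ℝ) 1)ᶜ = 0) →
        (∀ x, (∫ u, u ∂(RL x)) = rew x) →
      -- a class of measurable functions bounded by one
      ∀ (F : Set ((S × A) → ℝ)),
        (∀ f ∈ F, Measurable f) → (∀ f ∈ F, ∀ x, |f x| ≤ 1) →
      -- `g_f` is a minimizer over `F` of `g ↦ ‖g − Tf‖_μ`
      ∀ (gf : ((S × A) → ℝ) → (S × A) → ℝ),
        (∀ f ∈ F, gf f ∈ F ∧ ∀ g ∈ F,
          l2 μ (fun x => gf f x - bellmanOp γ rew P pol f x) ≤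
            l2 μ (fun x => g x - bellmanOp γ rew P pol f x)) →
      (∀ f ∈ F,
        variance (Xproc γ pol gf f) (tupleLaw μ RL P) ≤
          c * l2sq μ (fun x => f x - gf f x)) ∧
      (betaFac γ rew P pol μ F < 1 →
        ∀ f ∈ F,
          variance (Xproc γ pol gf f) (tupleLaw μ RL P) ≤
            (c' / (1 - betaFac γ rew P pol μ F)) *
              ∫ t, Xproc γ pol gf f t ∂(tupleLaw μ RL P)) ∧
      (Convex ℝ F →
        ∀ f ∈ F,
          variance (Xproc γ pol gf f) (tupleLaw μ RL P) ≤
            c'' * ∫ t, Xproc γ pol gf f t ∂(tupleLaw μ RL P)) := by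
  refine ⟨36, 144, 36, by norm_num, by norm_num, by norm_num, ?_⟩
  intro S A _ _ γ hγ0 hγ1 rew hrewm hrew01 P hPmk pol hpolmk μ hμprob RL hRLmk hRLsupp hRLmean
    F hFmeas hFbd gf hgf
  haveI := hPmk; haveI := hpolmk; haveI := hμprob; haveI := hRLmk
  have hν : tupleLaw μ RL P = μ ⊗ₘ (RL ×ₖ P) := by
    have hfun : (fun sa : S × A => (((RL sa).prod (P sa)).map (fun rs : ℝ × S => (sa, rs))))
        = ⇑(Kernel.id ×ₖ (RL ×ₖ P)) := by
      funext sa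
      rw [Kernel.prod_apply, Kernel.id_apply, Kernel.prod_apply, Measure.dirac_prod]
    rw [tupleLaw, hfun]
    ext s hs
    rw [Measure.bind_apply hs (Kernel.measurable _).aemeasurable, Measure.compProd_apply hs]
    refine lintegral_congr fun sa => ?_
    rw [Kernel.prod_apply, Kernel.id_apply, Kernel.prod_apply, Measure.dirac_prod,
      Measure.map_apply measurable_prodMk_left hs]
  haveI hprob : IsProbabilityMeasure (tupleLaw μ RL P) := by rw [hν]; infer_instance
  -- the main estimates, proved once
  have master : ∀ f ∈ F,
      variance (Xproc γ pol gf f) (tupleLaw μ RL P) ≤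
          36 * l2sq μ (fun x => f x - gf f x) ∧
        (∫ t, Xproc γ pol gf f t ∂(tupleLaw μ RL P)) =
          l2sq μ (fun x => f x - bellmanOp γ rew P pol f x) -
            l2sq μ (fun x => gf f x - bellmanOp γ rew P pol f x) ∧
        l2sq μ (fun x => f x - gf f x) ≤
          2 * l2sq μ (fun x => f x - bellmanOp γ rew P pol f x) +
            2 * l2sq μ (fun x => gf f x - bellmanOp γ rew P pol f x) := by
    intro f hfF
    obtain ⟨hgF, hgmin⟩ := hgf f hfF
    have hfm : Measurable f := hFmeas f hfF
    have hgm : Measurable (gf f) := hFmeas (gf f) hgF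
    have hfb : ∀ x, |f x| ≤ 1 := hFbd f hfF
    have hgb : ∀ x, |gf f x| ≤ 1 := hFbd (gf f) hgF
    have hmm : Measurable (bellmanOp γ rew P pol f) := aux_bellman_meas γ hrewm P pol hfm
    have hmb : ∀ x, |bellmanOp γ rew P pol f x| ≤ 2 :=
      aux_bellman_bound hγ0 hγ1.le hrew01 P pol hfb
    have hpem : Measurable (polExp pol f) := aux_polExp_meas pol hfm
    have hpeb : ∀ s, |polExp pol f s| ≤ 1 := aux_polExp_bound pol hfb
    have hDm : Measurable fun x => f x - gf f x := hfm.sub hgm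
    have hDb : ∀ x, |f x - gf f x| ≤ 2 := by
      intro x
      have h1 := abs_le.mp (hfb x); have h2 := abs_le.mp (hgb x)
      rw [abs_le]; constructor <;> [linarith [h1.1, h2.2]; linarith [h1.2, h2.1]]
    have hXeq : ∀ t : (S × A) × ℝ × S,
        Xproc γ pol gf f t = (f t.1 - gf f t.1) *
          (f t.1 + gf f t.1 - 2 * t.2.1 - 2 * (γ * polExp pol f t.2.2)) := by
      intro t; simp only [Xproc, tdCost]; ring
    have hXmeas : Measurable (Xproc γ pol gf f) := by
      have h1 : Measurable fun t : (S × A) × ℝ × S =>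
          (f t.1 - t.2.1 - γ * polExp pol f t.2.2) ^ 2 :=
        (((hfm.comp measurable_fst).sub (measurable_fst.comp measurable_snd)).sub
          (measurable_const.mul (hpem.comp (measurable_snd.comp measurable_snd)))).pow_const 2
      have h2 : Measurable fun t : (S × A) × ℝ × S =>
          (gf f t.1 - t.2.1 - γ * polExp pol f t.2.2) ^ 2 :=
        (((hgm.comp measurable_fst).sub (measurable_fst.comp measurable_snd)).sub
          (measurable_const.mul (hpem.comp (measurable_snd.comp measurable_snd)))).pow_const 2
      exact h1.sub h2
    -- rewards lie in [0,1] a.e.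
    have hae : ∀ᵐ t ∂(tupleLaw μ RL P), t.2.1 ∈ Set.Icc (0:ℝ) 1 := by
      rw [hν, ae_iff]
      have hms : MeasurableSet ((fun t : (S × A) × ℝ × S => t.2.1) ⁻¹' (Set.Icc (0:ℝ) 1)ᶜ) :=
        (measurable_fst.comp measurable_snd) measurableSet_Icc.compl
      rw [show {a : (S × A) × ℝ × S | ¬ a.2.1 ∈ Set.Icc (0:ℝ) 1}
          = (fun t : (S × A) × ℝ × S => t.2.1) ⁻¹' (Set.Icc (0:ℝ) 1)ᶜ from rfl]
      rw [Measure.compProd_apply hms]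
      have hz : ∀ sa : S × A, ((RL ×ₖ P) sa)
          (Prod.mk sa ⁻¹' ((fun t : (S × A) × ℝ × S => t.2.1) ⁻¹' (Set.Icc (0:ℝ) 1)ᶜ)) = 0 := by
        intro sa
        have hpre : Prod.mk sa ⁻¹' ((fun t : (S × A) × ℝ × S => t.2.1) ⁻¹' (Set.Icc (0:ℝ) 1)ᶜ)
            = (Set.Icc (0:ℝ) 1)ᶜ ×ˢ (Set.univ : Set S) := by
          ext rs; simp [Set.mem_prod]
        rw [hpre, Kernel.prod_apply, Measure.prod_prod, hRLsupp, zero_mul]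
      simp only [hz, lintegral_zero]
    -- pointwise a.e. bounds on X
    have haeX : ∀ᵐ t ∂(tupleLaw μ RL P), |Xproc γ pol gf f t| ≤ 12 ∧
        Xproc γ pol gf f t ^ 2 ≤ 36 * (f t.1 - gf f t.1) ^ 2 := by
      filter_upwards [hae] with t ht
      obtain ⟨hu0, hu1⟩ := ht
      have h1 := abs_le.mp (hfb t.1)
      have h2 := abs_le.mp (hgb t.1)
      have h3 := abs_le.mp (hpeb t.2.2)
      have hgp1 : γ * polExp pol f t.2.2 ≤ 1 := by nlinarith [h3.1, h3.2]
      have hgp2 : -1 ≤ γ * polExp pol f t.2.2 := by nlinarith [h3.1, h3.2]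
      have hw : |f t.1 + gf f t.1 - 2 * t.2.1 - 2 * (γ * polExp pol f t.2.2)| ≤ 6 := by
        rw [abs_le]; constructor <;> nlinarith
      have hD := abs_le.mp (hDb t.1)
      have hw' := abs_le.mp hw
      constructor
      · rw [hXeq t, abs_le]
        constructor <;> nlinarith
      · rw [hXeq t]
        have hw2 : (f t.1 + gf f t.1 - 2 * t.2.1 - 2 * (γ * polExp pol f t.2.2)) ^ 2 ≤ 36 := by
          nlinarith [hw'.1, hw'.2]
        calc ((f t.1 - gf f t.1) * (f t.1 + gf f t.1 - 2 * t.2.1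
              - 2 * (γ * polExp pol f t.2.2))) ^ 2
            = (f t.1 - gf f t.1) ^ 2 *
              (f t.1 + gf f t.1 - 2 * t.2.1 - 2 * (γ * polExp pol f t.2.2)) ^ 2 := by ring
          _ ≤ (f t.1 - gf f t.1) ^ 2 * 36 :=
              mul_le_mul_of_nonneg_left hw2 (sq_nonneg _)
          _ = 36 * (f t.1 - gf f t.1) ^ 2 := by ring
    have hXint : Integrable (Xproc γ pol gf f) (tupleLaw μ RL P) :=
      aux_int hXmeas.aestronglyMeasurable 12 (haeX.mono fun t h => h.1)
    -- marginal on the first coordinate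
    have hmapfst : (tupleLaw μ RL P).map Prod.fst = μ := by
      rw [hν]; exact Measure.fst_compProd μ (RL ×ₖ P)
    -- part 1 : variance bound
    have part1 : variance (Xproc γ pol gf f) (tupleLaw μ RL P) ≤
        36 * l2sq μ (fun x => f x - gf f x) := by
      have hv := variance_le_expectation_sq (μ := tupleLaw μ RL P)
        hXmeas.aestronglyMeasurable
      have hI2 : Integrable (fun t => Xproc γ pol gf f t ^ 2) (tupleLaw μ RL P) :=
        aux_int (hXmeas.pow_const 2).aestronglyMeasurable 144
          (haeX.mono fun t h => by
            have := aux_sq_abs h.1; norm_num at this ⊢; exact this)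
      have hI36 : Integrable (fun t : (S × A) × ℝ × S => 36 * (f t.1 - gf f t.1) ^ 2)
          (tupleLaw μ RL P) :=
        aux_int' (((hDm.comp measurable_fst)).pow_const 2 |>.const_mul 36) 144
          (fun t => by
            have := aux_sq_abs (hDb t.1)
            rw [abs_mul]; norm_num at this ⊢; linarith)
      have hmono : ∫ t, Xproc γ pol gf f t ^ 2 ∂(tupleLaw μ RL P) ≤
          ∫ t, 36 * (f t.1 - gf f t.1) ^ 2 ∂(tupleLaw μ RL P) :=
        integral_mono_ae hI2 hI36 (haeX.mono fun t h => h.2)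
      have hmap : ∫ t, 36 * (f t.1 - gf f t.1) ^ 2 ∂(tupleLaw μ RL P) =
          36 * l2sq μ (fun x => f x - gf f x) := by
        have him := integral_map (μ := tupleLaw μ RL P) (φ := Prod.fst)
          measurable_fst.aemeasurable
          (f := fun x : S × A => 36 * (f x - gf f x) ^ 2)
          (by rw [hmapfst]; exact ((hDm.pow_const 2).const_mul 36).aestronglyMeasurable)
        rw [hmapfst] at him
        rw [← him, l2sq, ← integral_const_mul]
      calc variance (Xproc γ pol gf f) (tupleLaw μ RL P)
          ≤ ∫ t, Xproc γ pol gf f t ^ 2 ∂(tupleLaw μ RL P) := by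
            simpa using hv
        _ ≤ ∫ t, 36 * (f t.1 - gf f t.1) ^ 2 ∂(tupleLaw μ RL P) := hmono
        _ = 36 * l2sq μ (fun x => f x - gf f x) := hmap
    -- part 2 : mean identity
    have i1 : Integrable (fun x => (f x - bellmanOp γ rew P pol f x) ^ 2) μ :=
      aux_int' ((hfm.sub hmm).pow_const 2) 9 (fun x => by
        have h1 := abs_le.mp (hfb x); have h2 := abs_le.mp (hmb x)
        have : |f x - bellmanOp γ rew P pol f x| ≤ 3 := by
          rw [abs_le]; constructor <;> linarith
        have := aux_sq_abs this; norm_num at this ⊢; exact this)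
    have i2 : Integrable (fun x => (gf f x - bellmanOp γ rew P pol f x) ^ 2) μ :=
      aux_int' ((hgm.sub hmm).pow_const 2) 9 (fun x => by
        have h1 := abs_le.mp (hgb x); have h2 := abs_le.mp (hmb x)
        have : |gf f x - bellmanOp γ rew P pol f x| ≤ 3 := by
          rw [abs_le]; constructor <;> linarith
        have := aux_sq_abs this; norm_num at this ⊢; exact this)
    have part2 : (∫ t, Xproc γ pol gf f t ∂(tupleLaw μ RL P)) =
        l2sq μ (fun x => f x - bellmanOp γ rew P pol f x) -
          l2sq μ (fun x => gf f x - bellmanOp γ rew P pol f x) := by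
      have hXint' : Integrable (Xproc γ pol gf f) (μ ⊗ₘ (RL ×ₖ P)) := hν ▸ hXint
      have hinner : ∀ sa : S × A, (∫ rs, Xproc γ pol gf f (sa, rs) ∂((RL ×ₖ P) sa)) =
          (f sa - bellmanOp γ rew P pol f sa) ^ 2
            - (gf f sa - bellmanOp γ rew P pol f sa) ^ 2 := by
        intro sa
        have hiu : Integrable (fun rs : ℝ × S => rs.1) ((RL sa).prod (P sa)) := by
          refine aux_int measurable_fst.aestronglyMeasurable 1 ?_
          rw [ae_iff]
          refine measure_mono_null (t := (Set.Icc (0:ℝ) 1)ᶜ ×ˢ (Set.univ : Set S))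
            (fun rs hrs => ?_) ?_
          · refine Set.mem_prod.mpr ⟨?_, Set.mem_univ rs.2⟩
            simp only [Set.mem_setOf_eq, not_le] at hrs
            simp only [Set.mem_compl_iff, Set.mem_Icc, not_and, not_le]
            intro h0
            by_contra h1
            push_neg at h1
            have : |rs.1| ≤ 1 := abs_le.mpr ⟨by linarith, by linarith⟩
            linarith
          · rw [Measure.prod_prod, hRLsupp, zero_mul]
        have hipe : Integrable (fun rs : ℝ × S => polExp pol f rs.2) ((RL sa).prod (P sa)) :=
          aux_int' (hpem.comp measurable_snd) 1 (fun rs => hpeb rs.2)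
        have hfst : ((RL sa).prod (P sa)).map Prod.fst = RL sa := Measure.fst_prod
        have hsnd : ((RL sa).prod (P sa)).map Prod.snd = P sa := Measure.snd_prod
        have hIu : (∫ rs : ℝ × S, rs.1 ∂((RL sa).prod (P sa))) = rew sa := by
          have him := integral_map (μ := (RL sa).prod (P sa)) (φ := Prod.fst)
            measurable_fst.aemeasurable (f := fun u : ℝ => u)
            (by rw [hfst]; exact aestronglyMeasurable_id)
          rw [hfst] at him
          rw [← him, hRLmean sa]
        have hIpe : (∫ rs : ℝ × S, polExp pol f rs.2 ∂((RL sa).prod (P sa))) =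
            ∫ s', polExp pol f s' ∂(P sa) := by
          have him := integral_map (μ := (RL sa).prod (P sa)) (φ := Prod.snd)
            measurable_snd.aemeasurable (f := polExp pol f)
            (by rw [hsnd]; exact hpem.aestronglyMeasurable)
          rw [hsnd] at him
          rw [← him]
        rw [Kernel.prod_apply]
        calc (∫ rs, Xproc γ pol gf f (sa, rs) ∂((RL sa).prod (P sa)))
            = ∫ rs : ℝ × S, ((f sa - gf f sa) * (f sa + gf f sa)
                + (-2 * (f sa - gf f sa)) * rs.1)
                + (-(2 * γ * (f sa - gf f sa))) * polExp pol f rs.2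
                ∂((RL sa).prod (P sa)) :=
              integral_congr_ae (Filter.Eventually.of_forall fun rs => by
                simp only [hXeq]; ring)
          _ = (∫ rs : ℝ × S, ((f sa - gf f sa) * (f sa + gf f sa)
                + (-2 * (f sa - gf f sa)) * rs.1) ∂((RL sa).prod (P sa)))
              + ∫ rs : ℝ × S, (-(2 * γ * (f sa - gf f sa))) * polExp pol f rs.2
                ∂((RL sa).prod (P sa)) :=
              integral_add ((integrable_const _).add (hiu.const_mul (-2 * (f sa - gf f sa))))
                (hipe.const_mul (-(2 * γ * (f sa - gf f sa))))
          _ = ((∫ _rs : ℝ × S, (f sa - gf f sa) * (f sa + gf f sa) ∂((RL sa).prod (P sa)))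
              + ∫ rs : ℝ × S, (-2 * (f sa - gf f sa)) * rs.1 ∂((RL sa).prod (P sa)))
              + ∫ rs : ℝ × S, (-(2 * γ * (f sa - gf f sa))) * polExp pol f rs.2
                ∂((RL sa).prod (P sa)) := by
              rw [integral_add (integrable_const ((f sa - gf f sa) * (f sa + gf f sa)))
                (hiu.const_mul (-2 * (f sa - gf f sa)))]
          _ = (f sa - gf f sa) * (f sa + gf f sa)
              + (-2 * (f sa - gf f sa)) * rew sa
              + (-(2 * γ * (f sa - gf f sa))) * ∫ s', polExp pol f s' ∂(P sa) := by
              have e1 : (∫ _rs : ℝ × S, (f sa - gf f sa) * (f sa + gf f sa)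
                  ∂((RL sa).prod (P sa))) = (f sa - gf f sa) * (f sa + gf f sa) := by
                rw [integral_const]; simp [measure_univ]
              have e2 : (∫ rs : ℝ × S, (-2 * (f sa - gf f sa)) * rs.1
                  ∂((RL sa).prod (P sa))) = (-2 * (f sa - gf f sa)) * rew sa := by
                rw [integral_const_mul, hIu]
              have e3 : (∫ rs : ℝ × S, (-(2 * γ * (f sa - gf f sa))) * polExp pol f rs.2
                  ∂((RL sa).prod (P sa))) = (-(2 * γ * (f sa - gf f sa)))
                  * ∫ s', polExp pol f s' ∂(P sa) := by
                rw [integral_const_mul, hIpe]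
              rw [e1, e2, e3]
          _ = (f sa - bellmanOp γ rew P pol f sa) ^ 2
              - (gf f sa - bellmanOp γ rew P pol f sa) ^ 2 := by
              simp only [bellmanOp]; ring
      rw [hν, Measure.integral_compProd hXint']
      rw [integral_congr_ae (Filter.Eventually.of_forall hinner)]
      rw [integral_sub i1 i2]
      rfl
    -- part 3 : parallelogram-type bound
    have part3 : l2sq μ (fun x => f x - gf f x) ≤
        2 * l2sq μ (fun x => f x - bellmanOp γ rew P pol f x) +
          2 * l2sq μ (fun x => gf f x - bellmanOp γ rew P pol f x) := by
      have iD : Integrable (fun x => (f x - gf f x) ^ 2) μ :=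
        aux_int' (hDm.pow_const 2) 4 (fun x => by
          have := aux_sq_abs (hDb x); norm_num at this ⊢; exact this)
      have hsum : Integrable (fun x => 2 * (f x - bellmanOp γ rew P pol f x) ^ 2
          + 2 * (gf f x - bellmanOp γ rew P pol f x) ^ 2) μ :=
        (i1.const_mul 2).add (i2.const_mul 2)
      have hpt : ∀ x, (f x - gf f x) ^ 2 ≤ 2 * (f x - bellmanOp γ rew P pol f x) ^ 2
          + 2 * (gf f x - bellmanOp γ rew P pol f x) ^ 2 := fun x => by
        nlinarith [sq_nonneg (f x + gf f x - 2 * bellmanOp γ rew P pol f x)]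
      have := integral_mono iD hsum hpt
      rw [integral_add (i1.const_mul 2) (i2.const_mul 2), integral_const_mul,
        integral_const_mul] at this
      exact this
    exact ⟨part1, part2, part3⟩
  refine ⟨fun f hf => (master f hf).1, ?_, ?_⟩
  · -- β < 1 case
    intro hβlt f hfF
    obtain ⟨h1, h2, h3⟩ := master f hfF
    obtain ⟨hgF, hgmin⟩ := hgf f hfF
    set E1 := l2sq μ (fun x => f x - bellmanOp γ rew P pol f x) with hE1def
    set E2 := l2sq μ (fun x => gf f x - bellmanOp γ rew P pol f x) with hE2def
    have hE1 : 0 ≤ E1 := integral_nonneg fun x => sq_nonneg _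
    have hE2 : 0 ≤ E2 := integral_nonneg fun x => sq_nonneg _
    have hsq1 : l2 μ (fun x => f x - bellmanOp γ rew P pol f x) ^ 2 = E1 :=
      Real.sq_sqrt hE1
    have hsq2 : l2 μ (fun x => gf f x - bellmanOp γ rew P pol f x) ^ 2 = E2 :=
      Real.sq_sqrt hE2
    have hl2le : l2 μ (fun x => gf f x - bellmanOp γ rew P pol f x) ≤
        l2 μ (fun x => f x - bellmanOp γ rew P pol f x) := hgmin f hfF
    have hE2E1 : E2 ≤ E1 := by
      rw [← hsq1, ← hsq2]
      exact pow_le_pow_left₀ (Real.sqrt_nonneg _) hl2le 2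
    set β := betaFac γ rew P pol μ F with hβdef
    rcases hE1.eq_or_lt with hE1z | hE1p
    · -- degenerate case: everything is zero
      have hE2z : E2 = 0 := le_antisymm (by linarith) hE2
      have hz : 144 / (1 - β) * (E1 - E2) = 0 := by
        rw [← hE1z, hE2z]; ring
      rw [h2, hz]
      have hD0 : l2sq μ (fun x => f x - gf f x) ≤ 0 := by
        linarith [h3, hE2z, hE1z.symm]
      linarith [h1, hD0]
    · have hepos : 0 < l2 μ (fun x => f x - bellmanOp γ rew P pol f x) :=
        Real.sqrt_pos.mpr hE1p
      have hbddBelow : ∀ h : (S × A) → ℝ, BddBelow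
          ((fun g => l2 μ (fun x => g x - h x)) '' F) :=
        fun h => ⟨0, by rintro y ⟨g', _, rfl⟩; exact Real.sqrt_nonneg _⟩
      have hproj : projDist μ F (bellmanOp γ rew P pol f) =
          l2 μ (fun x => gf f x - bellmanOp γ rew P pol f x) := by
        refine le_antisymm (csInf_le (hbddBelow _) ⟨gf f, hgF, rfl⟩)
          (le_csInf ⟨_, ⟨f, hfF, rfl⟩⟩ ?_)
        rintro y ⟨g', hg', rfl⟩
        exact hgmin g' hg'
      have hbddAbove : BddAbove ((fun f' => projDist μ F (bellmanOp γ rew P pol f') /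
          bellErr γ rew P pol μ f') '' {f' ∈ F | 0 < bellErr γ rew P pol μ f'}) := by
        refine ⟨1, ?_⟩
        rintro y ⟨f', ⟨hf'F, hf'pos⟩, rfl⟩
        have hle : projDist μ F (bellmanOp γ rew P pol f') ≤ bellErr γ rew P pol μ f' :=
          csInf_le (hbddBelow _) ⟨f', hf'F, rfl⟩
        exact (div_le_one hf'pos).mpr hle
      have hfmem : f ∈ {f' ∈ F | 0 < bellErr γ rew P pol μ f'} := ⟨hfF, hepos⟩
      have hle_β : projDist μ F (bellmanOp γ rew P pol f) / bellErr γ rew P pol μ f ≤ β :=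
        le_csSup hbddAbove ⟨f, hfmem, rfl⟩
      have hratio : l2 μ (fun x => gf f x - bellmanOp γ rew P pol f x) /
          l2 μ (fun x => f x - bellmanOp γ rew P pol f x) ≤ β := by
        rw [hproj] at hle_β; exact hle_β
      have hβ0 : 0 ≤ β :=
        le_trans (div_nonneg (Real.sqrt_nonneg _) hepos.le) hratio
      have hdle : l2 μ (fun x => gf f x - bellmanOp γ rew P pol f x) ≤
          β * l2 μ (fun x => f x - bellmanOp γ rew P pol f x) :=
        (div_le_iff₀ hepos).mp hratio
      have hl2g0 : 0 ≤ l2 μ (fun x => gf f x - bellmanOp γ rew P pol f x) :=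
        Real.sqrt_nonneg _
      have hE2β : E2 ≤ β ^ 2 * E1 := by
        rw [← hsq1, ← hsq2]
        calc (l2 μ fun x => gf f x - bellmanOp γ rew P pol f x) ^ 2
            ≤ (β * l2 μ fun x => f x - bellmanOp γ rew P pol f x) ^ 2 :=
              pow_le_pow_left₀ hl2g0 hdle 2
          _ = β ^ 2 * (l2 μ fun x => f x - bellmanOp γ rew P pol f x) ^ 2 := by ring
      rw [h2]
      have hβE : β ^ 2 * E1 ≤ β * E1 := by
        nlinarith [mul_nonneg (mul_nonneg hβ0 hE1) (sub_nonneg.mpr hβlt.le)]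
      have hEX : (1 - β) * E1 ≤ E1 - E2 := by linarith
      have hβsq : β ^ 2 * E1 ≤ E1 := by
        have hb1 : 0 ≤ (1 - β) * (1 + β) :=
          mul_nonneg (sub_nonneg.mpr hβlt.le) (by linarith)
        nlinarith [mul_nonneg hb1 hE1]
      have hvar : variance (Xproc γ pol gf f) (tupleLaw μ RL P) ≤ 144 * E1 := by
        linarith [h1, h3, hE2β, hβsq]
      have hfinal : 144 * E1 ≤ 144 / (1 - β) * (E1 - E2) := by
        rw [div_mul_eq_mul_div, le_div_iff₀ (by linarith : (0:ℝ) < 1 - β)]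
        nlinarith [hEX]
      linarith
  · -- convex case
    intro hconv f hfF
    obtain ⟨h1, h2, _⟩ := master f hfF
    obtain ⟨hgF, hgmin⟩ := hgf f hfF
    have hfm : Measurable f := hFmeas f hfF
    have hgm : Measurable (gf f) := hFmeas (gf f) hgF
    have hfb : ∀ x, |f x| ≤ 1 := hFbd f hfF
    have hgb : ∀ x, |gf f x| ≤ 1 := hFbd (gf f) hgF
    have hmm : Measurable (bellmanOp γ rew P pol f) :=
      aux_bellman_meas γ hrewm P pol hfm
    have hmb : ∀ x, |bellmanOp γ rew P pol f x| ≤ 2 :=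
      aux_bellman_bound hγ0 hγ1.le hrew01 P pol hfb
    have hpb : ∀ x, |gf f x - bellmanOp γ rew P pol f x| ≤ 3 := fun x => by
      have a1 := abs_le.mp (hgb x); have a2 := abs_le.mp (hmb x)
      rw [abs_le]; constructor <;> linarith
    have hqb : ∀ x, |f x - gf f x| ≤ 2 := fun x => by
      have a1 := abs_le.mp (hfb x); have a2 := abs_le.mp (hgb x)
      rw [abs_le]; constructor <;> linarith
    set N := ∫ x, (f x - gf f x) ^ 2 ∂μ with hNdef
    set I := ∫ x, (gf f x - bellmanOp γ rew P pol f x) * (f x - gf f x) ∂μ with hIdef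
    have hN0 : 0 ≤ N := integral_nonneg fun x => sq_nonneg _
    have hE2 : 0 ≤ l2sq μ (fun x => gf f x - bellmanOp γ rew P pol f x) :=
      integral_nonneg fun x => sq_nonneg _
    have hexp : ∀ t : ℝ,
        (∫ x, ((gf f x - bellmanOp γ rew P pol f x) + t * (f x - gf f x)) ^ 2 ∂μ)
          = l2sq μ (fun x => gf f x - bellmanOp γ rew P pol f x) + 2 * t * I + t ^ 2 * N :=
      fun t => aux_expand μ (hgm.sub hmm) (hfm.sub hgm) 3 2 hpb hqb t
    have hI0 : 0 ≤ I := by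
      by_contra hI
      push_neg at hI
      set t := min 1 (-I / (N + 1)) with htdef
      have htpos : 0 < t :=
        lt_min one_pos (div_pos (neg_pos.mpr hI) (by linarith))
      have ht1 : t ≤ 1 := min_le_left _ _
      have htI : t * (N + 1) ≤ -I := by
        have hh := min_le_right 1 (-I / (N + 1))
        calc t * (N + 1) ≤ (-I / (N + 1)) * (N + 1) := by
              have : (0:ℝ) < N + 1 := by linarith
              nlinarith [hh]
          _ = -I := by field_simp
      have hmemF : (fun x => gf f x + t * (f x - gf f x)) ∈ F := by
        have hc := hconv hgF hfF (by linarith : (0:ℝ) ≤ 1 - t) htpos.le (by ring)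
        have : (1 - t) • gf f + t • f = fun x => gf f x + t * (f x - gf f x) := by
          funext x
          simp only [Pi.add_apply, Pi.smul_apply, smul_eq_mul]
          ring
        rwa [this] at hc
      have hkey := hgmin _ hmemF
      have hsq : l2sq μ (fun x => gf f x - bellmanOp γ rew P pol f x) ≤
          l2sq μ (fun x => (gf f x + t * (f x - gf f x)) - bellmanOp γ rew P pol f x) := by
        have hn1 : 0 ≤ l2sq μ (fun x => (gf f x + t * (f x - gf f x))
            - bellmanOp γ rew P pol f x) := integral_nonneg fun x => sq_nonneg _
        have e1 := Real.sq_sqrt hE2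
        have e2 := Real.sq_sqrt hn1
        rw [← e1, ← e2]
        exact pow_le_pow_left₀ (Real.sqrt_nonneg _) hkey 2
      have hrw : l2sq μ (fun x => (gf f x + t * (f x - gf f x)) - bellmanOp γ rew P pol f x)
          = l2sq μ (fun x => gf f x - bellmanOp γ rew P pol f x) + 2 * t * I + t ^ 2 * N := by
        rw [← hexp t]
        exact integral_congr_ae (Filter.Eventually.of_forall fun x => by ring_nf)
      rw [hrw] at hsq
      have hcontra : 0 ≤ 2 * t * I + t ^ 2 * N := by linarith
      nlinarith [mul_le_mul_of_nonneg_left htI htpos.le, mul_pos htpos htpos,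
        mul_neg_of_pos_of_neg htpos hI]
    have hdecomp : l2sq μ (fun x => f x - bellmanOp γ rew P pol f x) =
        l2sq μ (fun x => gf f x - bellmanOp γ rew P pol f x) + 2 * 1 * I + 1 ^ 2 * N := by
      rw [← hexp 1]
      exact integral_congr_ae (Filter.Eventually.of_forall fun x => by ring_nf)
    rw [h2]
    have hND : l2sq μ (fun x => f x - gf f x) = N := rfl
    nlinarith [h1]


end
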